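/- arXiv:1506.01074 — 7 statements merged into one kernel-verified Lean document; each statement's English description precedes it below -/
import Mathlib

section
/- If α, β are elements of the profinite completion of (ℕ,+) and d is a positive natural number such that d·α = d·β, then α = β (i.e., the profinite completion of ℕ is torsion-free as far as cancellation by positive integers is concerned). -/
/-- The profinite completion `N̂` of the additive monoid `(ℕ,+)`, i.e. the free profinite
monoid on one generator, modelled as the monoid of unary implicit operations on finite
monoids: natural families `x ↦ x^α` commuting with all homomorphisms of finite monoids. -/
structure Nhat where
  F : ∀ (M : Type) [Monoid M] [Fintype M], M → M
  natural : ∀ {M N : Type} [Monoid M] [Fintype M] [Monoid N] [Fintype N]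
      (f : M →* N) (x : M), f (F M x) = F N (f x)

/-- Scalar multiplication `d • α` in `N̂` (additive notation), i.e. `x^{d·α} = (x^α)^d`. -/
def Nhat.nsmul (d : ℕ) (α : Nhat) : Nhat where
  F := fun M _ _ x => (α.F M x) ^ d
  natural := by
    intro M N _ _ _ _ f x
    rw [map_pow, α.natural f x]

section Aux

variable {M : Type*} [Monoid M]

/-- If `x^(i+q) = x^i` then powers are periodic with period `q` from `i` on. -/
lemma pow_helper (x : M) {i q : ℕ} (hx : x ^ (i + q) = x ^ i) :
    ∀ t k, i ≤ k → x ^ (k + t * q) = x ^ k := by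
  intro t
  induction t with
  | zero => simp
  | succ t ih =>
    intro k hk
    have h1 : x ^ (k + q) = x ^ k := by
      have he : k + q = (i + q) + (k - i) := by omega
      rw [he, pow_add, hx, ← pow_add]
      congr 1
      omega
    have he : k + (t + 1) * q = (k + q) + t * q := by ring
    rw [he, ih (k + q) (by omega), h1]

lemma pow_eventual (x : M) {n p : ℕ} (hx : x ^ (n + p) = x ^ n) {a b : ℕ}
    (ha : n ≤ a) (hb : n ≤ b) (hab : a % p = b % p) : x ^ a = x ^ b := by
  rcases Nat.eq_zero_or_pos p with hp | hp
  · subst hp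
    rw [Nat.mod_zero, Nat.mod_zero] at hab
    rw [hab]
  have key : ∀ a b : ℕ, n ≤ a → a ≤ b → a % p = b % p → x ^ a = x ^ b := by
    intro a b ha hab hm
    have hdvd : p ∣ b - a := (Nat.modEq_iff_dvd' hab).mp hm
    obtain ⟨t, ht⟩ := hdvd
    have he : b = a + t * p := by rw [Nat.mul_comm t p]; omega
    rw [he, pow_helper x hx t a ha]
  rcases le_total a b with hle | hle
  · exact key a b ha hle hab
  · exact (key b a hb hle hab.symm).symm

/-- Pigeonhole: in a finite monoid, `x^(m + m!) = x^m` where `m` is the cardinality. -/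
lemma pow_card_add_factorial [Fintype M] (x : M) :
    x ^ (Fintype.card M + (Fintype.card M).factorial) = x ^ (Fintype.card M) := by
  classical
  set m := Fintype.card M with hm
  have hminj : ¬ Function.Injective (fun i : Fin (m + 1) => x ^ (i : ℕ)) := by
    intro hinj
    have := Fintype.card_le_of_injective _ hinj
    simp [← hm] at this
  obtain ⟨i, j, hij, hne⟩ := Function.not_injective_iff.mp hminj
  -- WLOG i < j
  have key : ∀ i j : ℕ, i < j → j ≤ m → x ^ i = x ^ j → x ^ (m + m.factorial) = x ^ m := by
    intro i j hlt hjm hxe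
    set q := j - i with hq
    have hx1 : x ^ (i + q) = x ^ i := by
      have : i + q = j := by omega
      rw [this, hxe]
    have hqd : q ∣ m.factorial := Nat.dvd_factorial (by omega) (by omega)
    obtain ⟨t, ht⟩ := hqd
    have : m + m.factorial = m + t * q := by rw [Nat.mul_comm t q]; omega
    rw [this, pow_helper x hx1 t m (by omega)]
  have hi : (i : ℕ) ≤ m := by omega
  have hj : (j : ℕ) ≤ m := by omega
  rcases lt_or_gt_of_ne (fun he => hne (Fin.ext he)) with hlt | hlt
  · exact key i j hlt hj hij
  · exact key j i hlt hi hij.symm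

end Aux

/-- The congruence relation on `ℕ` for the cyclic monoid of index `n` and period `p`. -/
def ccon (n p : ℕ) : AddCon ℕ where
  r a b := a = b ∨ (n ≤ a ∧ n ≤ b ∧ a % p = b % p)
  iseqv := by
    refine ⟨fun a => Or.inl rfl, ?_, ?_⟩
    · rintro a b (rfl | ⟨h1, h2, h3⟩)
      · exact Or.inl rfl
      · exact Or.inr ⟨h2, h1, h3.symm⟩
    · rintro a b c (rfl | ⟨h1, h2, h3⟩) (rfl | ⟨k1, k2, k3⟩)
      · exact Or.inl rfl
      · exact Or.inr ⟨k1, k2, k3⟩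
      · exact Or.inr ⟨h1, h2, h3⟩
      · exact Or.inr ⟨h1, k2, h3.trans k3⟩
  add' := by
    rintro a b c e (rfl | ⟨h1, h2, h3⟩) (rfl | ⟨k1, k2, k3⟩)
    · exact Or.inl rfl
    · exact Or.inr ⟨by omega, by omega, Nat.ModEq.add_left a k3⟩
    · exact Or.inr ⟨by omega, by omega, Nat.ModEq.add_right c h3⟩
    · exact Or.inr ⟨by omega, by omega, Nat.ModEq.add h3 k3⟩

/-- The quotient is finite when the period is positive. -/
noncomputable def cconFintype (n p : ℕ) (hp : 0 < p) : Fintype (ccon n p).Quotient := by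
  classical
  have hsurj : Function.Surjective
      (fun i : Fin (n + p) => ((i : ℕ) : (ccon n p).Quotient)) := by
    intro q
    obtain ⟨a, rfl⟩ := AddCon.mk'_surjective q
    rw [AddCon.coe_mk']
    by_cases hlt : a < n + p
    · exact ⟨⟨a, hlt⟩, rfl⟩
    · refine ⟨⟨n + (a - n) % p, by have := Nat.mod_lt (a - n) hp; omega⟩, ?_⟩
      show ((n + (a - n) % p : ℕ) : (ccon n p).Quotient) = ↑a
      rw [AddCon.eq]
      refine Or.inr ⟨by omega, by omega, ?_⟩
      have h1 : a = n + (a - n) := by omega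
      conv_rhs => rw [h1]
      exact Nat.ModEq.add_left n (Nat.mod_modEq (a - n) p)
  exact Fintype.ofSurjective _ hsurj

/-- The monoid hom from the cyclic monoid quotient to `M` sending the class of `k` to `x^k`. -/
noncomputable def cpow {M : Type*} [Monoid M] (n p : ℕ) (x : M) (hx : x ^ (n + p) = x ^ n) :
    Multiplicative (ccon n p).Quotient →* M :=
  AddMonoidHom.toMultiplicativeLeft
    ((ccon n p).lift (multiplesHom (Additive M) (Additive.ofMul x)) (by
      rintro a b (rfl | ⟨h1, h2, h3⟩)
      · rfl
      · show a • Additive.ofMul x = b • Additive.ofMul x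
        rw [← ofMul_pow, ← ofMul_pow, pow_eventual x hx h1 h2 h3]))

lemma cpow_coe {M : Type*} [Monoid M] (n p : ℕ) (x : M) (hx : x ^ (n + p) = x ^ n) (k : ℕ) :
    cpow n p x hx (Multiplicative.ofAdd ((k : (ccon n p).Quotient))) = x ^ k := by
  show Multiplicative.toAdd _ = x ^ k
  simp [cpow, AddMonoidHom.toMultiplicativeLeft, AddCon.lift_coe]
  rfl

lemma ofAdd_coe_pow (n p k a : ℕ) :
    (Multiplicative.ofAdd ((a : ℕ) : (ccon n p).Quotient)) ^ k
      = Multiplicative.ofAdd (((k * a : ℕ) : (ccon n p).Quotient)) := by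
  induction k with
  | zero => rfl
  | succ k ih =>
    rw [pow_succ, ih, ← ofAdd_add, ← AddCon.coe_add]
    congr 2
    ring

/-- If `d·α = d·β` in the profinite completion of `(ℕ,+)` with `d` a positive natural
number, then `α = β`. -/
theorem cancel_nsmul_Nhat (α β : Nhat) (d : ℕ) (hd : 0 < d)
    (h : Nhat.nsmul d α = Nhat.nsmul d β) : α = β := by
  obtain ⟨Fα, nα⟩ := α
  obtain ⟨Fβ, nβ⟩ := β
  suffices hF : Fα = Fβ by simpa using hF
  funext M iM fM x
  classical
  have hMne : Nonempty M := ⟨1⟩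
  set m := Fintype.card M with hmdef
  have hm : 0 < m := Fintype.card_pos
  have hx : x ^ (m + m.factorial) = x ^ m := pow_card_add_factorial x
  set n := d * m with hn
  set p := d * m.factorial with hpdef
  have hp : 0 < p := Nat.mul_pos hd (Nat.factorial_pos m)
  have hx' : x ^ (n + p) = x ^ n := by
    have hmn : m ≤ n := Nat.le_mul_of_pos_left m hd
    refine pow_eventual x hx (le_trans hmn (Nat.le_add_right _ _)) hmn ?_
    show (n + p) % m.factorial = n % m.factorial
    rw [hpdef, Nat.add_mul_mod_self_right]
  letI instQ : Fintype (ccon n p).Quotient := cconFintype n p hp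
  set C := Multiplicative (ccon n p).Quotient with hC
  letI instC : Fintype C := instQ
  set g : C := Multiplicative.ofAdd ((1 : ℕ) : (ccon n p).Quotient) with hg
  obtain ⟨a, ha⟩ := AddCon.mk'_surjective (Multiplicative.toAdd (Fα C g))
  obtain ⟨b, hb⟩ := AddCon.mk'_surjective (Multiplicative.toAdd (Fβ C g))
  have hA : Fα C g = Multiplicative.ofAdd ((a : ℕ) : (ccon n p).Quotient) := by
    apply Multiplicative.toAdd.injective
    rw [← ha]; rfl
  have hB : Fβ C g = Multiplicative.ofAdd ((b : ℕ) : (ccon n p).Quotient) := by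
    apply Multiplicative.toAdd.injective
    rw [← hb]; rfl
  have h2 : (Fα C g) ^ d = (Fβ C g) ^ d := by
    have := congrArg (fun γ : Nhat => γ.F C g) h
    simpa [Nhat.nsmul] using this
  rw [hA, hB, ofAdd_coe_pow, ofAdd_coe_pow] at h2
  have h3 : ((d * a : ℕ) : (ccon n p).Quotient) = ((d * b : ℕ) : (ccon n p).Quotient) :=
    Multiplicative.ofAdd.injective h2
  have h4 := (AddCon.eq _).mp h3
  -- Now relate `Fα M x` to `x ^ a` and `Fβ M x` to `x ^ b`.
  have hφg : cpow n p x hx' g = x := by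
    rw [hg, cpow_coe, pow_one]
  have hαx : Fα M x = x ^ a := by
    have := nα (cpow n p x hx') g
    rw [hφg, hA, cpow_coe] at this
    exact this.symm
  have hβx : Fβ M x = x ^ b := by
    have := nβ (cpow n p x hx') g
    rw [hφg, hB, cpow_coe] at this
    exact this.symm
  rw [hαx, hβx]
  rcases h4 with heq | ⟨h1, h2', h3'⟩
  · have : a = b := Nat.eq_of_mul_eq_mul_left hd heq
    rw [this]
  · have ham : m ≤ a := by
      rw [hn] at h1; exact Nat.le_of_mul_le_mul_left h1 hd
    have hbm : m ≤ b := by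
      rw [hn] at h2'; exact Nat.le_of_mul_le_mul_left h2' hd
    have hmod : a % m.factorial = b % m.factorial := by
      rw [hpdef, Nat.mul_mod_mul_left, Nat.mul_mod_mul_left] at h3'
      exact Nat.eq_of_mul_eq_mul_left hd h3'
    exact pow_eventual x hx ham hbm hmod
end

section
/- Let d be a positive integer, n an integer, and suppose α in the profinite completion N̂ of (ℕ,+) satisfies ω + n = d·α, where ω = lim k!. Then d divides n and α = ω + n/d. -/
/-- reduced exponent in clock with index P, period P -/
def red (P a : ℕ) : ℕ := if a < 2*P then a else P + a % P

lemma red_lt {P : ℕ} (hP : 0 < P) (a : ℕ) : red P a < 2*P := by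
  unfold red; split
  · assumption
  · have := Nat.mod_lt a hP; omega

/-- successor clock -/
def clockSucc (P : ℕ) : Function.End (Fin (2*P)) :=
  fun j => if h : j.val + 1 < 2*P then ⟨j.val+1, h⟩ else ⟨P, by omega⟩

lemma red_succ {P : ℕ} (hP : 0 < P) (a : ℕ) :
    red P (a+1) = if red P a + 1 < 2*P then red P a + 1 else P := by
  unfold red
  rcases lt_trichotomy (a+1) (2*P) with h1 | h1 | h1
  · have : a < 2*P := by omega
    simp [h1, this]
  · have ha : a < 2*P := by omega
    have hna : ¬ (a+1 < 2*P) := by omega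
    have hm : (a+1) % P = 0 := by rw [h1]; exact Nat.mul_mod_left 2 P
    rw [if_neg hna, if_pos ha, hm, if_neg (by omega)]
    omega
  · have ha : ¬ (a < 2*P) := by omega
    have ha1 : ¬ (a+1 < 2*P) := by omega
    have hr : a % P < P := Nat.mod_lt a hP
    have hmod : (a+1) % P = (a % P + 1) % P := by
      conv_lhs => rw [← Nat.div_add_mod a P]
      rw [Nat.add_assoc, Nat.add_comm (P * (a/P)), Nat.add_mul_mod_self_left]
    rw [if_neg ha, if_neg ha1, hmod]
    rcases Nat.lt_or_ge (a % P + 1) P with h2 | h2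
    · rw [Nat.mod_eq_of_lt h2, if_pos (by omega)]
      omega
    · have h2' : a % P + 1 = P := by omega
      rw [h2', Nat.mod_self, if_neg (by omega)]
      omega

lemma clockSucc_pow {P : ℕ} (hP : 0 < P) (a : ℕ) :
    (clockSucc P ^ a) (⟨0, by omega⟩ : Fin (2*P)) = ⟨red P a, red_lt hP a⟩ := by
  induction a with
  | zero =>
    rw [pow_zero]
    apply Fin.ext
    show (0:ℕ) = red P 0
    unfold red
    rw [if_pos (by omega)]
  | succ a ih =>
    rw [pow_succ']
    have hstep : (clockSucc P * clockSucc P ^ a) (⟨0, by omega⟩ : Fin (2*P))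
        = clockSucc P ((clockSucc P ^ a) ⟨0, by omega⟩) := rfl
    rw [hstep, ih]
    apply Fin.ext
    show ((if h : red P a + 1 < 2*P then (⟨red P a + 1, h⟩ : Fin (2*P)) else ⟨P, by omega⟩) : Fin (2*P)).val = red P (a+1)
    rw [red_succ hP]
    by_cases hc : red P a + 1 < 2*P
    · rw [dif_pos hc, if_pos hc]
    · rw [dif_neg hc, if_neg hc]

lemma red_eq {P a b : ℕ} (hP : 0 < P) (hb : 2*P ≤ b) (h : red P a = red P b) :
    P ≤ a ∧ a % P = b % P := by
  have hrb : red P b = P + b % P := by unfold red; rw [if_neg (by omega)]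
  have hbP : b % P < P := Nat.mod_lt b hP
  rw [hrb] at h
  unfold red at h
  split at h
  · constructor
    · omega
    · rw [h, Nat.add_mod_left, Nat.mod_eq_of_lt hbP]
  · constructor
    · omega
    · have := Nat.mod_lt a hP; omega

lemma pow_add_factorial_eq {M : Type*} [Monoid M] [Fintype M] (x : M) {a : ℕ}
    (ha : Fintype.card M ≤ a) : x ^ (a + (Fintype.card M).factorial) = x ^ a := by
  set c := Fintype.card M with hc
  obtain ⟨i, j, hij, hpow⟩ := Fintype.exists_ne_map_eq_of_card_lt
    (fun j : Fin (c+1) => x ^ (j : ℕ)) (by simp only [Fintype.card_fin]; omega)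
  wlog hlt : (i:ℕ) < (j:ℕ) generalizing i j
  · exact this j i hij.symm hpow.symm
      (by rcases Nat.lt_or_ge (j:ℕ) (i:ℕ) with h | h; exact h;
          exact absurd (Fin.ext (by omega)) hij)
  set r := (j:ℕ) - (i:ℕ) with hr
  have hr0 : 0 < r := by omega
  have hrc : r ≤ c := by have := j.isLt; omega
  have hrdvd : r ∣ c.factorial := Nat.dvd_factorial hr0 hrc
  have hstep : ∀ u : ℕ, (i:ℕ) ≤ u → x ^ (u + r) = x ^ u := by
    intro u hu
    have h1 : u + r = (u - (i:ℕ)) + (j:ℕ) := by omega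
    have h2 : u = (u - (i:ℕ)) + (i:ℕ) := by omega
    rw [h1, pow_add, ← hpow, ← pow_add, ← h2]
  have hiter : ∀ v : ℕ, x ^ (a + v * r) = x ^ a := by
    intro v
    induction v with
    | zero => simp
    | succ v ih =>
      have : a + (v+1) * r = (a + v * r) + r := by ring
      rw [this, hstep _ (by omega), ih]
  obtain ⟨t, ht⟩ := hrdvd
  rw [ht, mul_comm, hiter]

lemma pow_eq_pow_of_modEq_fact {M : Type*} [Monoid M] [Fintype M] (x : M) {a b : ℕ}
    (ha : Fintype.card M ≤ a) (hb : Fintype.card M ≤ b)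
    (hmod : ((Fintype.card M).factorial : ℤ) ∣ (a:ℤ) - b) : x ^ a = x ^ b := by
  have key : ∀ u t : ℕ, Fintype.card M ≤ u →
      x ^ (u + t * (Fintype.card M).factorial) = x ^ u := by
    intro u t hu
    induction t with
    | zero => simp
    | succ t ih =>
      have h1 : u + (t+1) * (Fintype.card M).factorial
          = (u + t * (Fintype.card M).factorial) + (Fintype.card M).factorial := by ring
      rw [h1, pow_add_factorial_eq x (by omega), ih]
  rcases le_total a b with hab | hab
  · obtain ⟨t, ht⟩ := hmod
    have ht' : b = a + t.natAbs * (Fintype.card M).factorial := by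
      have hf : (0:ℤ) < ((Fintype.card M).factorial : ℤ) := by
        exact_mod_cast (Fintype.card M).factorial_pos
      have htn : t ≤ 0 := by nlinarith
      have hta : (t.natAbs : ℤ) = -t := by omega
      have hb' : (b:ℤ) = (a:ℤ) + (t.natAbs : ℤ) * ((Fintype.card M).factorial:ℤ) := by
        rw [hta]; linarith
      exact_mod_cast hb'
    rw [ht', key a _ ha]
  · obtain ⟨t, ht⟩ := hmod
    have ht' : a = b + t.natAbs * (Fintype.card M).factorial := by
      have hf : (0:ℤ) < ((Fintype.card M).factorial : ℤ) := by
        exact_mod_cast (Fintype.card M).factorial_pos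
      have htn : 0 ≤ t := by nlinarith
      have hta : (t.natAbs : ℤ) = t := by omega
      have ha' : (a:ℤ) = (b:ℤ) + (t.natAbs : ℤ) * ((Fintype.card M).factorial:ℤ) := by
        rw [hta]; linarith
      exact_mod_cast ha'
    rw [ht', key b _ hb]

/-- `β = ω + n` where `ω = lim k!` and `n : ℤ` (for negative `n`, `ω + n` is the unique
element with `(ω + n) + (-n) = ω`): on a finite monoid of cardinality `c`, the element
`x^{ω+n}` equals `x^{(|n|+1)·c! + n}` (the exponent is a positive integer). -/
def Nhat.IsOmegaAdd (n : ℤ) (β : Nhat) : Prop :=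
  ∀ (M : Type) [Monoid M] [Fintype M] (x : M),
    β.F M x = x ^ ((((n.natAbs + 1) * Nat.factorial (Fintype.card M) : ℕ) : ℤ) + n).toNat

lemma Nhat.key (d : ℕ) (hd : 0 < d) (n : ℤ) (α β : Nhat) (hβ : Nhat.IsOmegaAdd n β)
    (h : Nhat.nsmul d α = β) (M : Type) [Monoid M] [Fintype M] (x : M) :
    ∃ k : ℕ, α.F M x = x ^ k ∧ (Fintype.card M).factorial ≤ k ∧
      ((d : ℤ) * (Fintype.card M).factorial) ∣ (d : ℤ) * k - n := by
  set c := Fintype.card M with hc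
  set P := d * c.factorial with hPdef
  have hP : 0 < P := Nat.mul_pos hd c.factorial_pos
  let Q := Fin (2*P)
  let M' := Function.End Q
  letI : Fintype M' := (inferInstance : Fintype (Fin (2*P) → Fin (2*P)))
  let N := M × M'
  let s : M' := clockSucc P
  let y : N := (x, s)
  let S := Submonoid.closure {y}
  letI : Fintype S := Fintype.ofFinite S
  have hy : y ∈ S := Submonoid.subset_closure (Set.mem_singleton y)
  obtain ⟨k, hk⟩ := Submonoid.mem_closure_singleton.mp (α.F S ⟨y, hy⟩).2
  have hnat := α.natural S.subtype (⟨y, hy⟩ : S)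
  have hNy : α.F N y = y ^ k := by
    rw [hk]
    exact hnat.symm
  have hfst := α.natural (MonoidHom.fst M M') y
  have hMx : α.F M x = x ^ k := by
    have h2 : (MonoidHom.fst M M') (α.F N y) = x ^ k := by
      rw [hNy]; exact Prod.pow_fst y k
    rw [← h2]
    exact hfst.symm
  -- now use β on N
  set e : ℤ := (((n.natAbs + 1) * Nat.factorial (Fintype.card N) : ℕ) : ℤ) + n with he
  have hEq : (α.F N y) ^ d = y ^ e.toNat := by
    have h1 : (Nhat.nsmul d α).F N y = β.F N y := by rw [h]
    have h2 : (Nhat.nsmul d α).F N y = (α.F N y) ^ d := rfl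
    rw [← h2, h1, hβ N y]
  have hyE : y ^ (k * d) = y ^ e.toNat := by rw [pow_mul, ← hNy, hEq]
  have hsE : s ^ (k * d) = s ^ e.toNat := by
    have := congrArg Prod.snd hyE
    rwa [Prod.pow_snd, Prod.pow_snd] at this
  have hred : red P (k * d) = red P e.toNat := by
    have := congrFun hsE (⟨0, by omega⟩ : Q)
    rw [show (s : Function.End Q) = clockSucc P from rfl] at this
    rw [clockSucc_pow hP, clockSucc_pow hP] at this
    exact congrArg Fin.val this
  -- cardinality bounds
  have hcM' : Fintype.card M' = (2*P)^(2*P) := by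
    rw [show Fintype.card M' = Fintype.card (Q → Q) from Fintype.card_congr (Equiv.refl _),
      Fintype.card_fun, Fintype.card_fin]
  have hcN : Fintype.card N = c * Fintype.card M' := Fintype.card_prod M M'
  have h2P : 2*P ≤ Fintype.card N := by
    have h1 : 2*P ≤ (2*P)^(2*P) := Nat.le_self_pow (by omega) _
    have h2 : 1 ≤ c := Fintype.card_pos
    calc 2*P ≤ (2*P)^(2*P) := h1
      _ = Fintype.card M' := hcM'.symm
      _ ≤ c * Fintype.card M' := Nat.le_mul_of_pos_left _ h2
      _ = Fintype.card N := hcN.symm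
  have hfN : Fintype.card N ≤ (Fintype.card N).factorial := Nat.self_le_factorial _
  have hfge1 : (1:ℤ) ≤ ((Fintype.card N).factorial : ℤ) := by
    exact_mod_cast (Fintype.card N).factorial_pos
  have hnabs : -(n.natAbs : ℤ) ≤ n := by omega
  have hnmul : (n.natAbs : ℤ) ≤ (n.natAbs : ℤ) * ((Fintype.card N).factorial : ℤ) :=
    le_mul_of_one_le_right (by positivity) hfge1
  have heF : ((Fintype.card N).factorial : ℤ) ≤ e := by
    have habs : |n| = (n.natAbs : ℤ) := Int.abs_eq_natAbs n
    rw [he]; push_cast; rw [habs]; nlinarith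
  have he0 : 0 ≤ e := by
    calc (0:ℤ) ≤ _ := by positivity
      _ ≤ e := heF
  have he2P : 2*P ≤ e.toNat := by
    have h1 : (2*P : ℤ) ≤ e := by
      calc (2*P:ℤ) ≤ (Fintype.card N : ℤ) := by exact_mod_cast h2P
        _ ≤ ((Fintype.card N).factorial : ℤ) := by exact_mod_cast hfN
        _ ≤ e := heF
    omega
  obtain ⟨hkdP, hkdmod⟩ := red_eq hP he2P hred
  -- k ≥ c!
  have hkge : c.factorial ≤ k := by
    have h5 : d * c.factorial ≤ d * k := by
      rw [mul_comm d k]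
      exact le_trans (le_of_eq hPdef.symm) hkdP
    exact Nat.le_of_mul_le_mul_left h5 hd
  refine ⟨k, hMx, hkge, ?_⟩
  -- divisibility
  have hd1 : (P:ℤ) ∣ (e.toNat : ℤ) - (k*d : ℕ) := Nat.ModEq.dvd hkdmod
  have hd2 : (P:ℤ) ∣ e - n := by
    rw [he]
    have hPF : (P:ℕ) ∣ (Fintype.card N).factorial :=
      Nat.dvd_factorial hP (by omega)
    have : (P:ℤ) ∣ ((Fintype.card N).factorial : ℤ) := by exact_mod_cast hPF
    simpa using Dvd.dvd.mul_left this ((n.natAbs : ℤ) + 1)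
  have hPc : (P:ℤ) = (d:ℤ) * c.factorial := by rw [hPdef]; push_cast; ring
  rw [← hPc]
  have : (d:ℤ) * k - n = (e - n) - ((e.toNat : ℤ) - (k*d : ℕ)) - (e - (e.toNat:ℤ)) := by
    push_cast
    ring
  rw [this]
  have he3 : e - (e.toNat : ℤ) = 0 := by omega
  rw [he3]
  exact dvd_sub (dvd_sub hd2 hd1) (dvd_zero _)

/-- If `d` is a positive integer, `n` an integer, and `α ∈ N̂` satisfies `ω + n = d·α`,
then `d` divides `n` and `α = ω + n/d`. -/
theorem omega_add_eq_nsmul (d : ℕ) (hd : 0 < d) (n : ℤ) (α β : Nhat)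
    (hβ : Nhat.IsOmegaAdd n β) (h : Nhat.nsmul d α = β) :
    (d : ℤ) ∣ n ∧ Nhat.IsOmegaAdd (n / d) α := by
  have hdn : (d : ℤ) ∣ n := by
    obtain ⟨k0, -, -, hdvd0⟩ := Nhat.key d hd n α β hβ h PUnit PUnit.unit
    have h1 : (d:ℤ) ∣ (d:ℤ) * (Fintype.card PUnit).factorial := dvd_mul_right _ _
    have h2 : (d:ℤ) ∣ (d:ℤ) * k0 - n := dvd_trans h1 hdvd0
    have h3 : (d:ℤ) ∣ (d:ℤ) * k0 := dvd_mul_right _ _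
    have : n = (d:ℤ) * k0 - ((d:ℤ) * k0 - n) := by ring
    rw [this]
    exact dvd_sub h3 h2
  refine ⟨hdn, ?_⟩
  intro M _ _ x
  obtain ⟨k, hMx, hkge, hdvd⟩ := Nhat.key d hd n α β hβ h M x
  set m := n / d with hm
  have hn : n = (d:ℤ) * m := (Int.mul_ediv_cancel' hdn).symm
  rw [hMx]
  set c := Fintype.card M with hc
  set em : ℤ := (((m.natAbs + 1) * Nat.factorial c : ℕ) : ℤ) + m with hem
  have hfge1 : (1:ℤ) ≤ (c.factorial : ℤ) := by exact_mod_cast c.factorial_pos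
  have hnabs : -(m.natAbs : ℤ) ≤ m := by omega
  have hnmul : (m.natAbs : ℤ) ≤ (m.natAbs : ℤ) * (c.factorial : ℤ) :=
    le_mul_of_one_le_right (by positivity) hfge1
  have hemF : (c.factorial : ℤ) ≤ em := by
    have habs : |m| = (m.natAbs : ℤ) := Int.abs_eq_natAbs m
    rw [hem]; push_cast; rw [habs]; nlinarith
  have hcf : (c : ℤ) ≤ (c.factorial : ℤ) := by exact_mod_cast Nat.self_le_factorial c
  -- c! ∣ k - m
  have hcd : (c.factorial : ℤ) ∣ (k : ℤ) - m := by
    obtain ⟨t, ht⟩ := hdvd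
    have hd0 : (d:ℤ) ≠ 0 := by exact_mod_cast hd.ne'
    have : (d:ℤ) * ((k:ℤ) - m) = (d:ℤ) * ((c.factorial : ℤ) * t) := by
      rw [← mul_assoc, ← ht, hn]; ring
    exact ⟨t, mul_left_cancel₀ hd0 this⟩
  apply pow_eq_pow_of_modEq_fact
  · calc c ≤ c.factorial := Nat.self_le_factorial c
      _ ≤ k := hkge
  · -- c ≤ em.toNat
    have : (c:ℤ) ≤ em := le_trans hcf hemF
    omega
  · -- c! ∣ k - em.toNat
    have hem0 : (0:ℤ) ≤ em := le_trans (by positivity) hemF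
    have htn : (em.toNat : ℤ) = em := Int.toNat_of_nonneg hem0
    rw [htn, hem]
    have h2 : (c.factorial : ℤ) ∣ (((m.natAbs + 1) * Nat.factorial c : ℕ) : ℤ) := by
      push_cast
      exact Dvd.intro_left _ rfl
    have heq : (k:ℤ) - ((((m.natAbs + 1) * Nat.factorial c : ℕ) : ℤ) + m)
        = ((k:ℤ) - m) - (((m.natAbs + 1) * Nat.factorial c : ℕ) : ℤ) := by ring
    rw [heq]
    exact dvd_sub hcd h2
end

section
/- Let Γ be a finite directed multigraph and (π_k) a sequence of paths in Γ. If there is an edge ζ such that the sequence of the numbers of times π_k traverses ζ is unbounded, then there exists a cycle γ in Γ such that the sequence (min over edges e of γ of the number of times π_k traverses e) is unbounded. -/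
open List

section Aux

variable {E V : Type} [DecidableEq E]

/-- split a list at the first occurrence of `e`. -/
private lemma first_split {e : E} : ∀ (l : List E), e ∈ l →
    ∃ a b, l = a ++ e :: b ∧ e ∉ a := by
  intro l
  induction l with
  | nil => intro h; simp at h
  | cons x xs ih =>
    intro h
    by_cases hx : x = e
    · exact ⟨[], xs, by simp [hx], by simp⟩
    · have he : e ∈ xs := by
        rcases List.mem_cons.mp h with h1 | h1
        · exact absurd h1 (fun hh => hx hh.symm)
        · exact h1
      obtain ⟨a, b, hab, hna⟩ := ih he
      refine ⟨x :: a, b, by rw [hab]; rfl, ?_⟩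
      simp only [List.mem_cons, not_or]
      exact ⟨fun hh => hx hh.symm, hna⟩

/-- One loop-erasure step. -/
private lemma step_lemma {R : E → E → Prop} {p : List E} (hc : p.Chain' R)
    (hnd : ¬ p.Nodup) :
    ∃ p' : List E, p'.length < p.length ∧ p'.Chain' R ∧ p'.head? = p.head? ∧
      p'.getLast? = p.getLast? ∧ ∀ f ∈ p', f ∈ p := by
  obtain ⟨e, hdup⟩ := List.exists_duplicate_iff_not_nodup.mpr hnd
  have hcount : 2 ≤ p.count e := List.duplicate_iff_two_le_count.mp hdup
  have he : e ∈ p := List.count_pos_iff.mp (by omega)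
  obtain ⟨a, b, rfl, hna⟩ := first_split _ he
  have ha0 : a.count e = 0 := List.count_eq_zero.mpr hna
  have hcb : 1 ≤ b.count e := by
    have h1 : (a ++ e :: b).count e = a.count e + ((b.count e) + 1) := by
      rw [List.count_append, List.count_cons_self]
    omega
  have heb : e ∈ b := List.count_pos_iff.mp (by omega)
  obtain ⟨c, d, rfl, -⟩ := first_split _ heb
  refine ⟨a ++ e :: d, ?_, ?_, ?_, ?_, ?_⟩
  · simp
  · rw [List.Chain', List.isChain_append] at hc ⊢
    obtain ⟨h1, h2, h3⟩ := hc
    have h2' : (e :: d).Chain' R := by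
      have hsp : (e :: (c ++ e :: d)).Chain' R := h2
      have : ((e :: c) ++ (e :: d)).Chain' R := by simpa using hsp
      exact (List.isChain_append.mp this).2.1
    refine ⟨h1, h2', ?_⟩
    intro x hx y hy
    have hy' : e = y := by simpa using hy
    subst hy'
    exact h3 x hx e (by simp)
  · cases a <;> simp
  · have h : (e :: (c ++ e :: d)) = (e :: c) ++ (e :: d) := by simp
    rw [List.getLast?_append_cons, List.getLast?_append_cons, h,
      List.getLast?_append_cons]
  · intro f hf
    simp at hf ⊢
    tauto

/-- Full loop erasure (strong induction on length). -/
private lemma reduce_aux {R : E → E → Prop} : ∀ (n : ℕ) (p : List E), p.length ≤ n →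
    p.Chain' R →
    ∃ q : List E, q.Nodup ∧ q.Chain' R ∧ q.head? = p.head? ∧ q.getLast? = p.getLast? ∧
      ∀ f ∈ q, f ∈ p := by
  intro n
  induction n with
  | zero =>
    intro p hp _
    have : p = [] := List.length_eq_zero_iff.mp (by omega)
    subst this
    exact ⟨[], List.nodup_nil, List.isChain_nil, rfl, rfl, by simp⟩
  | succ n ih =>
    intro p hp hc
    by_cases hnd : p.Nodup
    · exact ⟨p, hnd, hc, rfl, rfl, fun f hf => hf⟩
    · obtain ⟨p', hlen, hc', hh, hl, hm⟩ := step_lemma hc hnd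
      obtain ⟨q, h1, h2, h3, h4, h5⟩ := ih p' (by omega) hc'
      exact ⟨q, h1, h2, h3.trans hh, h4.trans hl, fun f hf => hm f (h5 f hf)⟩

private lemma reduce {R : E → E → Prop} (p : List E) (hc : p.Chain' R) :
    ∃ q : List E, q.Nodup ∧ q.Chain' R ∧ q.head? = p.head? ∧ q.getLast? = p.getLast? ∧
      ∀ f ∈ q, f ∈ p :=
  reduce_aux p.length p le_rfl hc

variable (src tgt : E → V)

/-- Cycle predicate. -/
private def Cyc (p : List E) : Prop :=
  ∃ h : p ≠ [], p.Chain' (fun e f => tgt e = src f) ∧ tgt (p.getLast h) = src (p.head h)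

variable [Fintype E]

private lemma count_lemma (ζ : E) :
    ∀ (n : ℕ) (p : List E), p.Chain' (fun e f => tgt e = src f) → n + 1 ≤ p.count ζ →
    ∃ m : {l : List E // l.Nodup} → ℕ,
      n ≤ ∑ q : {l : List E // l.Nodup}, m q ∧
      ∀ q, m q ≠ 0 → Cyc src tgt q.val ∧ ∀ f ∈ q.val, m q ≤ p.count f := by
  intro n
  induction n with
  | zero => exact fun p _ _ => ⟨fun _ => 0, by simp⟩
  | succ n ih =>
    intro p hc hcount
    have hζ : ζ ∈ p := List.count_pos_iff.mp (by omega)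
    obtain ⟨a, b, rfl, hna⟩ := first_split _ hζ
    have ha0 : a.count ζ = 0 := List.count_eq_zero.mpr hna
    have hcb : n + 1 ≤ b.count ζ := by
      have h1 : (a ++ ζ :: b).count ζ = a.count ζ + (b.count ζ + 1) := by
        rw [List.count_append, List.count_cons_self]
      omega
    have hζb : ζ ∈ b := List.count_pos_iff.mp (by omega)
    obtain ⟨c, d, rfl, hnc⟩ := first_split _ hζb
    have hc0 : c.count ζ = 0 := List.count_eq_zero.mpr hnc
    -- p = a ++ (ζ :: c) ++ (ζ :: d)
    have hsplit : a ++ ζ :: (c ++ ζ :: d) = a ++ ((ζ :: c) ++ (ζ :: d)) := by simp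
    have hc2 : ((ζ :: c) ++ (ζ :: d)).Chain' (fun e f => tgt e = src f) := by
      rw [hsplit, List.Chain', List.isChain_append] at hc
      exact hc.2.1
    rw [List.Chain', List.isChain_append] at hc2
    obtain ⟨hcblock, hcd, hlink⟩ := hc2
    have hclose : tgt ((ζ :: c).getLast (List.cons_ne_nil _ _)) = src ζ := by
      apply hlink
      · rw [List.getLast?_eq_getLast (List.cons_ne_nil _ _)]
        exact Option.mem_def.mpr rfl
      · simp
    -- reduce the block to a nodup cycle
    obtain ⟨q₀, hq₀nd, hq₀c, hq₀h, hq₀l, hq₀m⟩ := reduce (ζ :: c) hcblock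
    have hq₀ne : q₀ ≠ [] := by
      intro h; rw [h] at hq₀h; simp at hq₀h
    have hq₀cyc : Cyc src tgt q₀ := by
      refine ⟨hq₀ne, hq₀c, ?_⟩
      have h1 : q₀.head hq₀ne = ζ := by
        have h := hq₀h
        rw [List.head?_eq_head hq₀ne] at h
        simp at h; exact h
      have h2 : q₀.getLast hq₀ne = (ζ :: c).getLast (List.cons_ne_nil _ _) := by
        have h := hq₀l
        rw [List.getLast?_eq_getLast hq₀ne,
          List.getLast?_eq_getLast (List.cons_ne_nil _ _)] at h
        simpa using h
      rw [h1, h2, hclose]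
    -- count of ζ in ζ :: d
    have hcd_count : n + 1 ≤ (ζ :: d).count ζ := by
      have h1 : (c ++ ζ :: d).count ζ = c.count ζ + (ζ :: d).count ζ :=
        List.count_append ..
      omega
    obtain ⟨m', hm'sum, hm'⟩ := ih (ζ :: d) hcd hcd_count
    refine ⟨fun q => m' q + if q.val = q₀ then 1 else 0, ?_, ?_⟩
    · rw [Finset.sum_add_distrib]
      have h1 : ∑ q : {l : List E // l.Nodup}, (if q.val = q₀ then 1 else 0)
          = ∑ q : {l : List E // l.Nodup}, (if q = ⟨q₀, hq₀nd⟩ then 1 else 0) := by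
        apply Finset.sum_congr rfl
        intro q _
        congr 1
        simp [Subtype.ext_iff]
      rw [h1, Finset.sum_ite_eq']
      simp
      omega
    · intro q hq
      have hcount_split : ∀ f : E, (a ++ ζ :: (c ++ ζ :: d)).count f
          = a.count f + (ζ :: c).count f + (ζ :: d).count f := by
        intro f
        rw [hsplit, List.count_append, List.count_append]
        omega
      by_cases hqQ : q.val = q₀
      · constructor
        · rw [hqQ]; exact hq₀cyc
        intro f hf
        rw [hqQ] at hf
        have hf1 : 1 ≤ (ζ :: c).count f := List.count_pos_iff.mpr (hq₀m f hf)
        have hf2 : m' q ≤ (ζ :: d).count f := by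
          by_cases hm0 : m' q = 0
          · simp [hm0]
          · exact (hm' q hm0).2 f (by rw [hqQ]; exact hf)
        rw [hcount_split f]
        simp only [if_pos hqQ]
        omega
      · simp only [if_neg hqQ, add_zero] at hq ⊢
        obtain ⟨hcyc, hcnt⟩ := hm' q hq
        refine ⟨hcyc, fun f hf => ?_⟩
        rw [hcount_split f]
        have := hcnt f hf
        omega

end Aux

/-- Let `Γ` be a finite directed multigraph (finite vertex set `V`, finite edge set `E`,
source and target maps) and `(π k)` a sequence of paths in `Γ` (lists of consecutive
edges). If there is an edge `ζ` such that the sequence of numbers of traversals of `ζ`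
by `π k` is unbounded, then there is a cycle `γ` such that the sequence of the minimum,
over edges `f` of `γ`, of the number of traversals of `f` by `π k` is unbounded. -/
theorem exists_unbounded_cycle (V E : Type) [Fintype V] [Fintype E] [DecidableEq E]
    (src tgt : E → V) (π : ℕ → List E)
    (hpath : ∀ k, List.Chain' (fun e f => tgt e = src f) (π k))
    (ζ : E) (hunb : ∀ B : ℕ, ∃ k, B ≤ (π k).count ζ) :
    ∃ (e : E) (γ : List E),
      List.Chain' (fun e' f => tgt e' = src f) (e :: γ) ∧
      tgt ((e :: γ).getLast (List.cons_ne_nil e γ)) = src e ∧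
      ∀ B : ℕ, ∃ k, ∀ f ∈ e :: γ, B ≤ (π k).count f := by
  by_contra hcon
  push_neg at hcon
  -- for each list, a bound that witnesses failure if it is a cycle
  have key : ∀ l : List E, ∃ B₀ : ℕ,
      Cyc src tgt l → ∀ k, ∃ f ∈ l, (π k).count f < B₀ := by
    intro l
    match l with
    | [] => exact ⟨0, fun hcyc => absurd rfl hcyc.choose⟩
    | e :: γ =>
      by_cases hcyc : Cyc src tgt (e :: γ)
      · obtain ⟨hne, hch, hcl⟩ := hcyc
        obtain ⟨B₀, hB₀⟩ := hcon e γ hch hcl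
        exact ⟨B₀, fun _ k => hB₀ k⟩
      · exact ⟨0, fun h => absurd h hcyc⟩
  choose Bfun hB using key
  set B1 := Finset.univ.sup (fun q : {l : List E // l.Nodup} => Bfun q.val) with hB1
  haveI : Nonempty {l : List E // l.Nodup} := ⟨⟨[], List.nodup_nil⟩⟩
  have hNpos : 0 < Fintype.card {l : List E // l.Nodup} := Fintype.card_pos
  obtain ⟨k, hk⟩ := hunb ((B1 + 1) * Fintype.card {l : List E // l.Nodup} + 1)
  obtain ⟨m, hmsum, hm⟩ := count_lemma src tgt ζ
    ((B1 + 1) * Fintype.card {l : List E // l.Nodup}) (π k) (hpath k) hk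
  have hpig : ∃ q : {l : List E // l.Nodup}, B1 + 1 ≤ m q := by
    by_contra hno
    push_neg at hno
    have h1 : ∑ q : {l : List E // l.Nodup}, m q
        < ∑ _q : {l : List E // l.Nodup}, (B1 + 1) :=
      Finset.sum_lt_sum_of_nonempty Finset.univ_nonempty (fun q _ => hno q)
    rw [Finset.sum_const, Finset.card_univ, smul_eq_mul, Nat.mul_comm] at h1
    omega
  obtain ⟨q, hq⟩ := hpig
  have hqne : m q ≠ 0 := by omega
  obtain ⟨hcyc, hcnt⟩ := hm q hqne
  obtain ⟨f, hf, hflt⟩ := hB q.val hcyc k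
  have h1 : m q ≤ (π k).count f := hcnt f hf
  have h2 : Bfun q.val ≤ B1 := by
    rw [hB1]
    exact Finset.le_sup (f := fun q : {l : List E // l.Nodup} => Bfun q.val)
      (Finset.mem_univ q)
  omega
end

section
/- Every finitely generated subgroup of a free group of finite rank is closed in the profinite topology (M. Hall's theorem). -/
/-- The profinite topology on a group: basic open sets are the cosets of finite-index
subgroups (equivalently, a base of neighbourhoods of the identity is given by the
finite-index normal subgroups). -/
def profiniteTopology (G : Type) [Group G] : TopologicalSpace G :=
  TopologicalSpace.generateFrom
    {s : Set G | ∃ (H : Subgroup G) (g : G), H.index ≠ 0 ∧ s = (fun h => g * h) '' (H : Set G)}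

/-- M. Hall's theorem: every finitely generated subgroup of a free group of finite rank
is closed in the profinite topology. -/
theorem hall_fg_subgroup_closed (n : ℕ) (H : Subgroup (FreeGroup (Fin n))) (hH : H.FG) :
    @IsClosed _ (profiniteTopology (FreeGroup (Fin n))) (H : Set (FreeGroup (Fin n))) := by
  classical
  obtain ⟨T, hT⟩ := hH
  -- Main separability statement
  have main : ∀ g : FreeGroup (Fin n), g ∉ H → ∃ K : Subgroup (FreeGroup (Fin n)),
      K.index ≠ 0 ∧ H ≤ K ∧ g ∉ K := by
    intro g hg
    let Y : Finset (FreeGroup (Fin n) ⧸ H) := (insert g T).biUnion fun w =>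
      ((w.toWord.tails).map fun M => ((FreeGroup.mk M : FreeGroup (Fin n)) : FreeGroup (Fin n) ⧸ H)).toFinset
    have hmemY : ∀ w ∈ insert g T, ∀ M, M <:+ w.toWord →
        ((FreeGroup.mk M : FreeGroup (Fin n)) : FreeGroup (Fin n) ⧸ H) ∈ Y := by
      intro w hw M hM
      exact Finset.mem_biUnion.mpr ⟨w, hw,
        List.mem_toFinset.mpr (List.mem_map.mpr ⟨M, (List.mem_tails _ _).mpr hM, rfl⟩)⟩
    have hbase : ((1 : FreeGroup (Fin n)) : FreeGroup (Fin n) ⧸ H) ∈ Y := by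
      have h := hmemY g (Finset.mem_insert_self g T) [] List.nil_suffix
      rwa [← FreeGroup.one_eq_mk] at h
    -- partial bijections extended to permutations
    let e : ∀ i : Fin n, {c : {c : FreeGroup (Fin n) ⧸ H // c ∈ Y} // (FreeGroup.of i : FreeGroup (Fin n)) • (c : FreeGroup (Fin n) ⧸ H) ∈ Y} ≃
        {c : {c : FreeGroup (Fin n) ⧸ H // c ∈ Y} // (FreeGroup.of i : FreeGroup (Fin n))⁻¹ • (c : FreeGroup (Fin n) ⧸ H) ∈ Y} := fun i =>
      { toFun := fun c => ⟨⟨(FreeGroup.of i : FreeGroup (Fin n)) • (c.1 : FreeGroup (Fin n) ⧸ H), c.2⟩, by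
          simp only [inv_smul_smul]; exact c.1.2⟩
        invFun := fun c => ⟨⟨(FreeGroup.of i : FreeGroup (Fin n))⁻¹ • (c.1 : FreeGroup (Fin n) ⧸ H), c.2⟩, by
          simp only [smul_inv_smul]; exact c.1.2⟩
        left_inv := fun c => by
          apply Subtype.ext; apply Subtype.ext; simp [inv_smul_smul]
        right_inv := fun c => by
          apply Subtype.ext; apply Subtype.ext; simp [smul_inv_smul] }
    let σ : Fin n → Equiv.Perm {c : FreeGroup (Fin n) ⧸ H // c ∈ Y} := fun i => (e i).extendSubtype
    have hσ : ∀ (i : Fin n) (c : {c : FreeGroup (Fin n) ⧸ H // c ∈ Y})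
        (h : (FreeGroup.of i : FreeGroup (Fin n)) • (c : FreeGroup (Fin n) ⧸ H) ∈ Y),
        ((σ i c : {c : FreeGroup (Fin n) ⧸ H // c ∈ Y}) : FreeGroup (Fin n) ⧸ H) = (FreeGroup.of i : FreeGroup (Fin n)) • (c : FreeGroup (Fin n) ⧸ H) := by
      intro i c h
      rw [show σ i c = (e i).extendSubtype c from rfl, Equiv.extendSubtype_apply_of_mem (e i) c h]
      rfl
    have hσinv : ∀ (i : Fin n) (c : {c : FreeGroup (Fin n) ⧸ H // c ∈ Y})
        (h : (FreeGroup.of i : FreeGroup (Fin n))⁻¹ • (c : FreeGroup (Fin n) ⧸ H) ∈ Y),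
        (((σ i)⁻¹ c : {c : FreeGroup (Fin n) ⧸ H // c ∈ Y}) : FreeGroup (Fin n) ⧸ H) = (FreeGroup.of i : FreeGroup (Fin n))⁻¹ • (c : FreeGroup (Fin n) ⧸ H) := by
      intro i c h
      have hd : σ i ⟨(FreeGroup.of i : FreeGroup (Fin n))⁻¹ • (c : FreeGroup (Fin n) ⧸ H), h⟩ = c := by
        apply Subtype.ext
        rw [hσ i ⟨(FreeGroup.of i : FreeGroup (Fin n))⁻¹ • (c : FreeGroup (Fin n) ⧸ H), h⟩ (by simp only [smul_inv_smul]; exact c.2)]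
        simp [smul_inv_smul]
      have : ((σ i)⁻¹ : Equiv.Perm _) c = ⟨(FreeGroup.of i : FreeGroup (Fin n))⁻¹ • (c : FreeGroup (Fin n) ⧸ H), h⟩ := by
        rw [Equiv.Perm.inv_def, Equiv.symm_apply_eq, hd]
      rw [this]
    let φ : FreeGroup (Fin n) →* Equiv.Perm {c : FreeGroup (Fin n) ⧸ H // c ∈ Y} := FreeGroup.lift σ
    have hφof : ∀ i : Fin n, φ (FreeGroup.of i) = σ i := fun i => FreeGroup.lift_apply_of
    -- key computation
    have key : ∀ L : List (Fin n × Bool),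
        (∀ M, M <:+ L → ((FreeGroup.mk M : FreeGroup (Fin n)) : FreeGroup (Fin n) ⧸ H) ∈ Y) →
        ((φ (FreeGroup.mk L) ⟨((1 : FreeGroup (Fin n)) : FreeGroup (Fin n) ⧸ H), hbase⟩ : {c : FreeGroup (Fin n) ⧸ H // c ∈ Y}) : FreeGroup (Fin n) ⧸ H)
          = ((FreeGroup.mk L : FreeGroup (Fin n)) : FreeGroup (Fin n) ⧸ H) := by
      intro L
      induction L with
      | nil =>
        intro _
        rw [← FreeGroup.one_eq_mk, map_one]
        rfl
      | cons x L ih =>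
        intro hL
        have hLsub : ∀ M, M <:+ L → ((FreeGroup.mk M : FreeGroup (Fin n)) : FreeGroup (Fin n) ⧸ H) ∈ Y :=
          fun M hM => hL M (hM.trans (List.suffix_cons x L))
        have hcL : ((FreeGroup.mk L : FreeGroup (Fin n)) : FreeGroup (Fin n) ⧸ H) ∈ Y := hL L (List.suffix_cons x L)
        have hcxL : ((FreeGroup.mk (x :: L) : FreeGroup (Fin n)) : FreeGroup (Fin n) ⧸ H) ∈ Y := hL _ (List.suffix_refl _)
        have h1 : (FreeGroup.mk (x :: L) : FreeGroup (Fin n)) = FreeGroup.mk [x] * FreeGroup.mk L := by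
          rw [FreeGroup.mul_mk]; rfl
        rw [h1, map_mul, Equiv.Perm.mul_apply]
        have hval : (φ (FreeGroup.mk L) ⟨((1 : FreeGroup (Fin n)) : FreeGroup (Fin n) ⧸ H), hbase⟩ : {c : FreeGroup (Fin n) ⧸ H // c ∈ Y})
            = ⟨((FreeGroup.mk L : FreeGroup (Fin n)) : FreeGroup (Fin n) ⧸ H), hcL⟩ := Subtype.ext (ih hLsub)
        rw [hval]
        obtain ⟨i, b⟩ := x
        cases b
        · -- inverse letter
          have hx : (FreeGroup.mk [((i : Fin n), false)] : FreeGroup (Fin n)) = (FreeGroup.of i)⁻¹ := by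
            rw [show (FreeGroup.of i : FreeGroup (Fin n)) = FreeGroup.mk [(i, true)] from rfl, FreeGroup.inv_mk]
            rfl
          have hsm : (FreeGroup.of i : FreeGroup (Fin n))⁻¹ • ((FreeGroup.mk L : FreeGroup (Fin n)) : FreeGroup (Fin n) ⧸ H)
              = ((FreeGroup.mk ((i, false) :: L) : FreeGroup (Fin n)) : FreeGroup (Fin n) ⧸ H) := by
            rw [MulAction.Quotient.smul_coe, smul_eq_mul, ← hx, FreeGroup.mul_mk]
            rfl
          rw [hx, map_inv, hφof]
          rw [hσinv i ⟨((FreeGroup.mk L : FreeGroup (Fin n)) : FreeGroup (Fin n) ⧸ H), hcL⟩ (by rw [hsm]; exact hcxL)]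
          exact hsm
        · -- positive letter
          have hx : (FreeGroup.mk [((i : Fin n), true)] : FreeGroup (Fin n)) = FreeGroup.of i := rfl
          have hsm : (FreeGroup.of i : FreeGroup (Fin n)) • ((FreeGroup.mk L : FreeGroup (Fin n)) : FreeGroup (Fin n) ⧸ H)
              = ((FreeGroup.mk ((i, true) :: L) : FreeGroup (Fin n)) : FreeGroup (Fin n) ⧸ H) := by
            rw [MulAction.Quotient.smul_coe, smul_eq_mul, ← hx, FreeGroup.mul_mk]
            rfl
          rw [hx, hφof]
          rw [hσ i ⟨((FreeGroup.mk L : FreeGroup (Fin n)) : FreeGroup (Fin n) ⧸ H), hcL⟩ (by rw [hsm]; exact hcxL)]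
          exact hsm
    -- the finite index subgroup
    let pt : {c : FreeGroup (Fin n) ⧸ H // c ∈ Y} := ⟨((1 : FreeGroup (Fin n)) : FreeGroup (Fin n) ⧸ H), hbase⟩
    let K : Subgroup (FreeGroup (Fin n)) := Subgroup.comap φ (MulAction.stabilizer (Equiv.Perm {c : FreeGroup (Fin n) ⧸ H // c ∈ Y}) pt)
    have hmemK : ∀ w : FreeGroup (Fin n), w ∈ K ↔ φ w pt = pt := by
      intro w
      constructor
      · intro h; exact h
      · intro h; exact h
    have hkerK : φ.ker ≤ K := by
      intro w hw
      rw [hmemK]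
      rw [MonoidHom.mem_ker] at hw
      rw [hw]; rfl
    refine ⟨K, ?_, ?_, ?_⟩
    · -- finite index
      have h1 : K.index ∣ φ.ker.index := Subgroup.index_dvd_of_le hkerK
      have h2 : φ.ker.index = Nat.card φ.range := Subgroup.index_ker φ
      have h3 : Nat.card φ.range ≠ 0 := Nat.card_pos.ne'
      intro h0
      rw [h0] at h1
      have h4 := Nat.eq_zero_of_zero_dvd h1
      rw [h2] at h4
      exact h3 h4
    · -- H ≤ K
      rw [← hT, Subgroup.closure_le]
      intro t ht
      rw [SetLike.mem_coe, hmemK]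
      apply Subtype.ext
      have hw := key t.toWord (fun M hM => hmemY t (Finset.mem_insert_of_mem (Finset.mem_coe.mp ht)) M hM)
      rw [FreeGroup.mk_toWord] at hw
      rw [hw]
      have htH : t ∈ H := hT ▸ Subgroup.subset_closure ht
      show ((t : FreeGroup (Fin n)) : FreeGroup (Fin n) ⧸ H) = ((1 : FreeGroup (Fin n)) : FreeGroup (Fin n) ⧸ H)
      rw [QuotientGroup.eq]
      simpa using htH
    · -- g ∉ K
      intro hgK
      rw [hmemK] at hgK
      have hw := key g.toWord (fun M hM => hmemY g (Finset.mem_insert_self g T) M hM)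
      rw [FreeGroup.mk_toWord] at hw
      have : ((g : FreeGroup (Fin n)) : FreeGroup (Fin n) ⧸ H) = ((1 : FreeGroup (Fin n)) : FreeGroup (Fin n) ⧸ H) := by
        rw [← hw, hgK]
      rw [QuotientGroup.eq] at this
      simp only [mul_one, inv_mem_iff] at this
      exact hg this
  -- conclude closedness
  letI : TopologicalSpace (FreeGroup (Fin n)) := profiniteTopology (FreeGroup (Fin n))
  rw [← isOpen_compl_iff]
  rw [isOpen_iff_forall_mem_open]
  intro g hg
  obtain ⟨K, hK0, hHK, hgK⟩ := main g hg
  refine ⟨(fun h => g * h) '' (K : Set (FreeGroup (Fin n))), ?_, ?_, ?_⟩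
  · rintro x ⟨k, hk, rfl⟩ hx
    exact hgK (by simpa using mul_mem (hHK hx) (inv_mem hk) : g ∈ K)
  · exact TopologicalSpace.GenerateOpen.basic _ ⟨K, g, hK0, rfl⟩
  · exact ⟨1, K.one_mem, mul_one g⟩
end

section
/- In a free group F of finite rank, the subgroup generated by a rational subset L of F is finitely generated (Anissimow–Seifert). -/
open Pointwise

/-- The rational subsets of a group (or semigroup): the smallest family of subsets
containing the finite subsets and closed under union, (pointwise) product, and
plus-iteration `Y ↦ Y⁺` (the generated subsemigroup). -/
inductive IsRational {M : Type} [Group M] : Set M → Prop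
  | finite (s : Set M) : s.Finite → IsRational s
  | union (s t : Set M) : IsRational s → IsRational t → IsRational (s ∪ t)
  | mul (s t : Set M) : IsRational s → IsRational t → IsRational (s * t)
  | plus (s : Set M) : IsRational s → IsRational (Subsemigroup.closure s : Set M)

private lemma fg_sup {M : Type} [Group M] {H K : Subgroup M} (hH : H.FG) (hK : K.FG) :
    (H ⊔ K).FG := by
  classical
  obtain ⟨S, hS⟩ := hH
  obtain ⟨T, hT⟩ := hK
  exact ⟨S ∪ T, by rw [Finset.coe_union, Subgroup.closure_union, hS, hT]⟩

private lemma key_mul {M : Type} [Group M] (g h s0 t0 : M) (s t : Set M)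
    (hs0 : s0 ∈ s) (ht0 : t0 ∈ t) :
    Subgroup.closure ((fun x => g * x * h) '' (s * t)) =
      Subgroup.closure ((fun x => g * x * (t0 * h)) '' s) ⊔
      Subgroup.closure ((fun x => (g * s0) * x * h) '' t) := by
  apply le_antisymm
  · rw [Subgroup.closure_le]
    rintro - ⟨-, ⟨a, ha, b, hb, rfl⟩, rfl⟩
    have e : g * (a * b) * h =
        (g * a * (t0 * h)) * (g * s0 * (t0 * h))⁻¹ * ((g * s0) * b * h) := by group
    have mem : g * (a * b) * h ∈ Subgroup.closure ((fun x => g * x * (t0 * h)) '' s) ⊔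
        Subgroup.closure ((fun x => (g * s0) * x * h) '' t) := by
      rw [e]
      exact mul_mem
        (mul_mem (Subgroup.mem_sup_left (Subgroup.subset_closure ⟨a, ha, rfl⟩))
          (inv_mem (Subgroup.mem_sup_left (Subgroup.subset_closure ⟨s0, hs0, rfl⟩))))
        (Subgroup.mem_sup_right (Subgroup.subset_closure ⟨b, hb, rfl⟩))
    exact mem
  · apply sup_le <;> rw [Subgroup.closure_le]
    · rintro - ⟨a, ha, rfl⟩
      exact Subgroup.subset_closure ⟨a * t0, Set.mul_mem_mul ha ht0, by group⟩
    · rintro - ⟨b, hb, rfl⟩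
      exact Subgroup.subset_closure ⟨s0 * b, Set.mul_mem_mul hs0 hb, by group⟩

private lemma key_plus {M : Type} [Group M] (g h a0 : M) (s : Set M) (ha0 : a0 ∈ s) :
    Subgroup.closure ((fun x => g * x * h) '' (Subsemigroup.closure s : Set M)) =
      Subgroup.closure ((fun x => g * x * h) '' s) ⊔
      Subgroup.closure ((fun x => g * x * h) '' (s * s)) := by
  set K := Subgroup.closure ((fun x => g * x * h) '' s) ⊔
      Subgroup.closure ((fun x => g * x * h) '' (s * s)) with hK
  apply le_antisymm
  · rw [Subgroup.closure_le]
    rintro - ⟨x, hx, rfl⟩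
    have main : ∀ x ∈ Subsemigroup.closure s, g * x * h ∈ K ∧ g * (x * a0) * h ∈ K := by
      intro x hx
      induction hx using Subsemigroup.closure_induction with
      | mem a ha =>
        exact ⟨Subgroup.mem_sup_left (Subgroup.subset_closure ⟨a, ha, rfl⟩),
          Subgroup.mem_sup_right
            (Subgroup.subset_closure ⟨a * a0, Set.mul_mem_mul ha ha0, rfl⟩)⟩
      | mul x y hx hy ihx ihy =>
        have ha0K : g * a0 * h ∈ K :=
          Subgroup.mem_sup_left (Subgroup.subset_closure ⟨a0, ha0, rfl⟩)
        have e1 : g * (x * y) * h =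
            (g * (x * a0) * h) * (g * a0 * h)⁻¹ * (g * y * h) := by group
        have e2 : g * (x * y * a0) * h =
            (g * (x * a0) * h) * (g * a0 * h)⁻¹ * (g * (y * a0) * h) := by group
        exact ⟨e1 ▸ mul_mem (mul_mem ihx.2 (inv_mem ha0K)) ihy.1,
          e2 ▸ mul_mem (mul_mem ihx.2 (inv_mem ha0K)) ihy.2⟩
    exact (main x hx).1
  · apply sup_le <;> rw [Subgroup.closure_le]
    · exact fun y hy => Subgroup.subset_closure
        (Set.image_mono Subsemigroup.subset_closure hy)
    · refine fun y hy => Subgroup.subset_closure (Set.image_mono ?_ hy)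
      rintro - ⟨a, ha, b, hb, rfl⟩
      exact mul_mem (Subsemigroup.subset_closure ha) (Subsemigroup.subset_closure hb)

private lemma aux_rational {M : Type} [Group M] {L : Set M} (hL : IsRational L) :
    ∀ g h : M, (Subgroup.closure ((fun x => g * x * h) '' L)).FG := by
  induction hL with
  | finite s hs =>
    intro g h
    exact ⟨(hs.image _).toFinset, by rw [Set.Finite.coe_toFinset]⟩
  | union s t _ _ ihs iht =>
    intro g h
    rw [Set.image_union, Subgroup.closure_union]
    exact fg_sup (ihs g h) (iht g h)
  | mul s t _ _ ihs iht =>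
    intro g h
    rcases s.eq_empty_or_nonempty with rfl | ⟨s0, hs0⟩
    · simp only [Set.empty_mul, Set.image_empty, Subgroup.closure_empty]
      exact ⟨∅, by simp⟩
    rcases t.eq_empty_or_nonempty with rfl | ⟨t0, ht0⟩
    · simp only [Set.mul_empty, Set.image_empty, Subgroup.closure_empty]
      exact ⟨∅, by simp⟩
    rw [key_mul g h s0 t0 s t hs0 ht0]
    exact fg_sup (ihs g (t0 * h)) (iht (g * s0) h)
  | plus s _ ih =>
    intro g h
    rcases s.eq_empty_or_nonempty with rfl | ⟨a0, ha0⟩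
    · simp only [Subsemigroup.closure_empty, Subsemigroup.coe_bot, Set.image_empty,
        Subgroup.closure_empty]
      exact ⟨∅, by simp⟩
    rw [key_plus g h a0 s ha0]
    refine fg_sup (ih g h) ?_
    rw [key_mul g h a0 a0 s s ha0 ha0]
    exact fg_sup (ih g (a0 * h)) (ih (g * a0) h)

/-- Anissimow–Seifert: in a free group of finite rank, the subgroup generated by a
rational subset is finitely generated. -/
theorem subgroup_of_rational_fg (n : ℕ) (L : Set (FreeGroup (Fin n)))
    (hL : IsRational L) : (Subgroup.closure L).FG := by
  have := aux_rational hL 1 1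
  simpa using this
end

section
/- Let φ : G → H be a continuous surjective homomorphism of topological groups and suppose that for subsets K, L of G the 'Pin-Reutenauer' equalities cl(KL) = cl(K)cl(L) and cl(L⁺) = ⟨cl(L)⟩ hold for all members of a family C closed under the rational operations and containing the finite sets, where moreover φ(cl(S)) = cl(φ(S)) holds for finite S. Then φ(cl(L)) = cl(φ(L)) for every L ∈ C. -/
open Pointwise

/-- The closure of a base family `C0` of subsets of a group under the rational
operations: union, (pointwise) product and plus-iteration (generated subsemigroup). -/
inductive RatFrom {G : Type} [Group G] (C0 : Set (Set G)) : Set G → Prop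
  | base (s : Set G) : s ∈ C0 → RatFrom C0 s
  | union (s t : Set G) : RatFrom C0 s → RatFrom C0 t → RatFrom C0 (s ∪ t)
  | mul (s t : Set G) : RatFrom C0 s → RatFrom C0 t → RatFrom C0 (s * t)
  | plus (s : Set G) : RatFrom C0 s → RatFrom C0 (Subsemigroup.closure s : Set G)

/-- Let `φ : G → H` be a continuous surjective homomorphism of topological groups, and
let `C` be the closure under the rational operations of a family of finite subsets of
`G`. Suppose the Pin-Reutenauer equalities `cl(KL) = cl(K)·cl(L)` and
`cl(L⁺) = ⟨cl(L)⟩` hold for members of `C` (in `G`) and for their images under `φ`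
(in `H`), and that `φ(cl(S)) = cl(φ(S))` for every finite `S`. Then
`φ(cl(L)) = cl(φ(L))` for every `L ∈ C`. -/
theorem fullness_of_PR (G H : Type) [Group G] [Group H]
    [TopologicalSpace G] [TopologicalSpace H] [IsTopologicalGroup G] [IsTopologicalGroup H]
    (φ : G →* H) (hcont : Continuous φ) (hsurj : Function.Surjective φ)
    (C0 : Set (Set G)) (hfin : ∀ s ∈ C0, s.Finite)
    (hPRmulG : ∀ K L : Set G, RatFrom C0 K → RatFrom C0 L →
      closure (K * L) = closure K * closure L)
    (hPRplusG : ∀ L : Set G, RatFrom C0 L →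
      closure (Subsemigroup.closure L : Set G) = (Subgroup.closure (closure L) : Set G))
    (hPRmulH : ∀ K L : Set G, RatFrom C0 K → RatFrom C0 L →
      closure ((φ '' K) * (φ '' L)) = closure (φ '' K) * closure (φ '' L))
    (hPRplusH : ∀ L : Set G, RatFrom C0 L →
      closure (Subsemigroup.closure (φ '' L) : Set H)
        = (Subgroup.closure (closure (φ '' L)) : Set H))
    (hfinS : ∀ S : Set G, S.Finite → φ '' closure S = closure (φ '' S)) :
    ∀ L : Set G, RatFrom C0 L → φ '' closure L = closure (φ '' L) := by
  intro L hL
  induction hL with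
  | base s hs => exact hfinS s (hfin s hs)
  | union s t hs ht ihs iht =>
      rw [closure_union, Set.image_union, ihs, iht, Set.image_union, closure_union]
  | mul s t hs ht ihs iht =>
      rw [hPRmulG s t hs ht, Set.image_mul, ihs, iht, ← hPRmulH s t hs ht,
        ← Set.image_mul]
  | plus s hs ihs =>
      rw [hPRplusG s hs]
      have h1 : φ '' (Subgroup.closure (closure s) : Set G)
          = (Subgroup.closure (φ '' closure s) : Set H) := by
        rw [← MonoidHom.map_closure]; rfl
      have h2 : φ '' (Subsemigroup.closure s : Set G)
          = (Subsemigroup.closure (φ '' s) : Set H) := by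
        have := congrArg (SetLike.coe) (MulHom.map_mclosure (φ : G →ₙ* H) s)
        simpa [Subsemigroup.coe_map] using this
      rw [h1, ihs, ← hPRplusH s hs, h2]
end

section
/- For every subgroup H of the profinite completion of ℤ (equivalently, of N̂ ∖ ℕ viewed as the free profinite group on one generator) and every element α, if some positive multiple dα lies in the subgroup of elements of the form ω + n (n ∈ ℤ), then writing dα = ω + n forces d | n. -/
/-- If a positive multiple `d·α` of an element `α` of the procyclic group lies in the
subgroup of elements of the form `ω + n` (`n ∈ ℤ`), then writing `d·α = ω + n`
forces `d ∣ n`. -/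
theorem dvd_of_nsmul_eq_omega_add (d : ℕ) (hd : 0 < d) (n : ℤ) (α β : Nhat)
    (hβ : Nhat.IsOmegaAdd n β) (h : Nhat.nsmul d α = β) :
    (d : ℤ) ∣ n := by
  have hdz : NeZero d := ⟨hd.ne'⟩
  set M := Multiplicative (ZMod d) with hM
  set x : M := Multiplicative.ofAdd (1 : ZMod d) with hx
  have hcard : Fintype.card M = d := by
    simpa [M] using ZMod.card d
  have heq : (α.F M x) ^ d = β.F M x := by
    rw [← h]; rfl
  rw [hβ M x] at heq
  -- exponent
  set e : ℤ := (((n.natAbs + 1) * Nat.factorial (Fintype.card M) : ℕ) : ℤ) + n with he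
  have hnn : 0 ≤ e := by
    have h1 : (n.natAbs : ℤ) + 1 ≤ (((n.natAbs + 1) * Nat.factorial (Fintype.card M) : ℕ) : ℤ) := by
      have := Nat.factorial_pos (Fintype.card M)
      have : (n.natAbs + 1) * 1 ≤ (n.natAbs + 1) * Nat.factorial (Fintype.card M) :=
        Nat.mul_le_mul_left _ this
      exact_mod_cast by simpa using this
    have h2 : -n ≤ (n.natAbs : ℤ) := by
      rw [← Int.natAbs_neg]; exact Int.le_natAbs
    omega
  -- take additive values
  have hadd : ((e.toNat : ZMod d)) = 0 := by
    have h1 : (Multiplicative.toAdd ((α.F M x) ^ d)) = (d : ℕ) • Multiplicative.toAdd (α.F M x) :=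
      toAdd_pow _ _
    have h2 : Multiplicative.toAdd (x ^ e.toNat) = (e.toNat : ℕ) • (1 : ZMod d) := by
      rw [hx, toAdd_pow, toAdd_ofAdd]
    have h3 := congrArg Multiplicative.toAdd heq
    rw [h1, h2] at h3
    have hz : (d : ℕ) • Multiplicative.toAdd (α.F M x) = 0 := by
      have : ((d : ZMod d)) = 0 := ZMod.natCast_self d
      rw [nsmul_eq_mul, this, zero_mul]
    rw [hz] at h3
    simpa using h3.symm
  have : ((n : ZMod d)) = 0 := by
    have hcast : ((e.toNat : ℤ) : ZMod d) = (e : ZMod d) := by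
      rw [Int.toNat_of_nonneg hnn]
    have hfac : ((Nat.factorial (Fintype.card M) : ZMod d)) = 0 := by
      rw [hcard]
      exact (ZMod.natCast_eq_zero_iff _ _).mpr (Nat.dvd_factorial hd le_rfl)
    have : (e : ZMod d) = 0 := by
      rw [← hcast]; exact_mod_cast hadd
    rw [he] at this
    push_cast at this
    rw [hfac] at this
    simpa using this
  exact (ZMod.intCast_zmod_eq_zero_iff_dvd n d).mp this
end
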